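/- Let n ≥ 1 and let w be a permutation of {1,…,n}. Then dis(w)/2 = ℓ(w) if and only if w avoids the pattern 321, i.e., there are no indices i < j < k in {1,…,n} with w(i) > w(j) > w(k). -/

import Mathlib

namespace Stmt0

/-- The adjacent transposition `sᵢ = (i, i+1)`, acting on `ℤ`. -/
def s (i : ℕ) : Equiv.Perm ℤ := Equiv.swap (i : ℤ) ((i : ℤ) + 1)

/-- `w` is a permutation of `{1, …, n}` (fixing everything else). -/
def IsPermOn (n : ℕ) (w : Equiv.Perm ℤ) : Prop :=
  ∀ i : ℤ, i < 1 ∨ (n : ℤ) < i → w i = i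

/-- `l` is a word for `w` in the letters `{1, …, n-1}`,
i.e. `w = s_{i₁} ⋯ s_{i_ℓ}` with all letters in `{1, …, n-1}`. -/
def IsWord (n : ℕ) (w : Equiv.Perm ℤ) (l : List ℕ) : Prop :=
  (∀ i ∈ l, 1 ≤ i ∧ i + 1 ≤ n) ∧ (l.map s).prod = w

/-- The Coxeter length of `w`: the minimal length of a word for `w`. -/
noncomputable def len (n : ℕ) (w : Equiv.Perm ℤ) : ℕ :=
  sInf {m | ∃ l : List ℕ, IsWord n w l ∧ l.length = m}

/-- The disarray `dis(w) = ∑_{i=1}^n |w(i) - i|`. -/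
noncomputable def dis (n : ℕ) (w : Equiv.Perm ℤ) : ℤ :=
  ∑ i ∈ Finset.Icc (1 : ℤ) (n : ℤ), |w i - i|

/-! ### Auxiliary machinery -/

open Finset

/-- The number of inversions of `w` inside `{1,…,n}`. -/
noncomputable def invw (n : ℕ) (w : Equiv.Perm ℤ) : ℕ :=
  ((Icc (1:ℤ) (n:ℤ) ×ˢ Icc (1:ℤ) (n:ℤ)).filter (fun p => p.1 < p.2 ∧ w p.2 < w p.1)).card

/-- The set of positions `j > i` with `w j < w i`. -/
noncomputable def Cset (n : ℕ) (w : Equiv.Perm ℤ) (i : ℤ) : Finset ℤ :=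
  (Icc (1:ℤ) (n:ℤ)).filter (fun j => i < j ∧ w j < w i)

lemma invw_eq_sum (n : ℕ) (w : Equiv.Perm ℤ) :
    invw n w = ∑ i ∈ Icc (1:ℤ) (n:ℤ), (Cset n w i).card := by
  simp only [invw, Cset, Finset.card_filter, Finset.sum_product]

lemma apply_mem {n : ℕ} {w : Equiv.Perm ℤ} (hw : IsPermOn n w) {i : ℤ}
    (h1 : 1 ≤ i) (h2 : i ≤ n) : 1 ≤ w i ∧ w i ≤ n := by
  by_contra hcon
  have hout : w i < 1 ∨ (n:ℤ) < w i := by omega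
  have := w.injective (hw (w i) hout)
  omega

lemma inv_permOn {n : ℕ} {w : Equiv.Perm ℤ} (hw : IsPermOn n w) : IsPermOn n w⁻¹ := by
  intro i hi
  conv_lhs => rw [← hw i hi]
  simp

lemma card_S {n : ℕ} {w : Equiv.Perm ℤ} (hw : IsPermOn n w) {i : ℤ}
    (h1 : 1 ≤ i) (h2 : i ≤ n) :
    ((Icc (1:ℤ) (n:ℤ)).filter (fun j => w j < w i)).card = (w i - 1).toNat := by
  have hwi := apply_mem hw h1 h2
  have : (w i - 1).toNat = (Icc (1:ℤ) (w i - 1)).card := by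
    rw [Int.card_Icc]; congr 1; ring
  rw [this]
  apply Finset.card_nbij' (i := fun j => w j) (j := fun v => w⁻¹ v)
  · intro a ha
    simp only [Finset.mem_coe, mem_filter, mem_Icc] at ha ⊢
    have := apply_mem hw ha.1.1 ha.1.2
    omega
  · intro v hv
    simp only [Finset.mem_coe, mem_filter, mem_Icc] at hv ⊢
    have hv' := apply_mem (inv_permOn hw) hv.1 (by omega)
    refine ⟨⟨by simpa using hv'.1, by simpa using hv'.2⟩, ?_⟩
    have : w (w⁻¹ v) = v := w.apply_symm_apply v
    omega
  · intro a _; exact w.symm_apply_apply a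
  · intro v _; exact w.apply_symm_apply v

lemma card_split {n : ℕ} (w : Equiv.Perm ℤ) (i : ℤ) :
    (((Icc (1:ℤ) (n:ℤ)).filter (fun j => w j < w i)).filter (fun j => j < i)).card
      + (Cset n w i).card
      = ((Icc (1:ℤ) (n:ℤ)).filter (fun j => w j < w i)).card := by
  have hC : ((Icc (1:ℤ) (n:ℤ)).filter (fun j => w j < w i)).filter (fun j => ¬ j < i)
      = Cset n w i := by
    ext j
    simp only [Cset, mem_filter, mem_Icc, not_lt]
    constructor
    · rintro ⟨⟨hj, hv⟩, hge⟩
      refine ⟨hj, ?_, hv⟩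
      rcases lt_or_eq_of_le hge with h | h
      · exact h
      · subst h; exact absurd hv (lt_irrefl _)
    · rintro ⟨hj, hlt, hv⟩
      exact ⟨⟨hj, hv⟩, le_of_lt hlt⟩
  rw [← hC]
  exact Finset.card_filter_add_card_filter_not _

lemma card_Slt_le {n : ℕ} (w : Equiv.Perm ℤ) {i : ℤ} (h1 : 1 ≤ i) :
    (((Icc (1:ℤ) (n:ℤ)).filter (fun j => w j < w i)).filter (fun j => j < i)).card
      ≤ (i - 1).toNat := by
  have : (((Icc (1:ℤ) (n:ℤ)).filter (fun j => w j < w i)).filter (fun j => j < i))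
      ⊆ Icc (1:ℤ) (i - 1) := by
    intro j hj
    simp only [mem_filter, mem_Icc] at hj ⊢
    omega
  have := Finset.card_le_card this
  rwa [Int.card_Icc, show (i - 1 + 1 - 1 : ℤ) = i - 1 by ring] at this

/-- Claim A: `max(w i - i, 0) ≤ |Cset i|`. -/
lemma card_C_ge {n : ℕ} {w : Equiv.Perm ℤ} (hw : IsPermOn n w) {i : ℤ}
    (h1 : 1 ≤ i) (h2 : i ≤ n) : (w i - i).toNat ≤ (Cset n w i).card := by
  have hS := card_S hw h1 h2
  have hsplit := card_split (n := n) w i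
  have hlt := card_Slt_le (n := n) w (i := i) h1
  have hwi := apply_mem hw h1 h2
  omega

/-- Claim B: if there is no 321 pattern then `|Cset i| ≤ max(w i - i, 0)`. -/
lemma card_C_le {n : ℕ} {w : Equiv.Perm ℤ} (hw : IsPermOn n w)
    (hav : ¬ ∃ i j k : ℤ, 1 ≤ i ∧ i < j ∧ j < k ∧ k ≤ (n : ℤ) ∧ w i > w j ∧ w j > w k)
    {i : ℤ} (h1 : 1 ≤ i) (h2 : i ≤ n) : (Cset n w i).card ≤ (w i - i).toNat := by
  by_contra hcon
  push_neg at hcon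
  obtain ⟨k, hk⟩ : (Cset n w i).Nonempty := Finset.card_pos.mp (by omega)
  simp only [Cset, mem_filter, mem_Icc] at hk
  have hS := card_S hw h1 h2
  have hsplit := card_split (n := n) w i
  have hwi := apply_mem hw h1 h2
  -- the positions `< i` with small values are few
  set T := (((Icc (1:ℤ) (n:ℤ)).filter (fun j => w j < w i)).filter (fun j => j < i)) with hT
  have hTsub : T ⊆ Icc (1:ℤ) (i - 1) := by
    intro j hj
    simp only [hT, mem_filter, mem_Icc] at hj ⊢
    omega
  have hTcard : T.card < (Icc (1:ℤ) (i - 1)).card := by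
    rw [Int.card_Icc]
    omega
  obtain ⟨h', hh'⟩ : ((Icc (1:ℤ) (i-1)) \ T).Nonempty := by
    rw [← Finset.card_pos, Finset.card_sdiff_of_subset hTsub]
    omega
  rw [Finset.mem_sdiff] at hh'
  obtain ⟨hh1, hh2⟩ := hh'
  rw [mem_Icc] at hh1
  have hh3 : ¬ (w h' < w i) := by
    intro hv
    exact hh2 (by simp only [hT, mem_filter, mem_Icc]; omega)
  have hne : w h' ≠ w i := fun h => by
    have := w.injective h; omega
  exact hav ⟨h', i, k, hh1.1, by omega, hk.2.1, hk.1.2, by omega, hk.2.2⟩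

/-- Claim C: a 321 pattern with middle `j` forces `|Cset j| > max(w j - j, 0)`. -/
lemma card_C_gt {n : ℕ} {w : Equiv.Perm ℤ} (hw : IsPermOn n w)
    {i j k : ℤ} (hi : 1 ≤ i) (hij : i < j) (hjk : j < k) (hk : k ≤ (n:ℤ))
    (hv1 : w j < w i) (hv2 : w k < w j) :
    (w j - j).toNat + 1 ≤ (Cset n w j).card := by
  have h1 : (1:ℤ) ≤ j := by omega
  have h2 : j ≤ (n:ℤ) := by omega
  have hS := card_S hw h1 h2
  have hsplit := card_split (n := n) w j
  have hwj := apply_mem hw h1 h2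
  have hkC : k ∈ Cset n w j := by
    simp only [Cset, mem_filter, mem_Icc]
    exact ⟨⟨by omega, hk⟩, hjk, hv2⟩
  have hCpos : 1 ≤ (Cset n w j).card := Finset.card_pos.mpr ⟨k, hkC⟩
  -- the small-valued positions left of j avoid i
  set T := (((Icc (1:ℤ) (n:ℤ)).filter (fun v => w v < w j)).filter (fun v => v < j)) with hT
  have hTsub : T ⊆ (Icc (1:ℤ) (j - 1)).erase i := by
    intro v hv
    simp only [hT, mem_filter, mem_Icc] at hv
    rw [Finset.mem_erase, mem_Icc]
    refine ⟨?_, by omega⟩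
    intro h; subst h; omega
  have hTcard : T.card ≤ (j - 1).toNat - 1 := by
    have := Finset.card_le_card hTsub
    rwa [Finset.card_erase_of_mem (by rw [mem_Icc]; omega), Int.card_Icc,
      show (j - 1 + 1 - 1 : ℤ) = j - 1 by ring] at this
  omega

/-! ### `dis` as twice a sum -/

lemma sum_eq (n : ℕ) {w : Equiv.Perm ℤ} (hw : IsPermOn n w) :
    ∑ i ∈ Icc (1:ℤ) (n:ℤ), w i = ∑ i ∈ Icc (1:ℤ) (n:ℤ), i := by
  apply Finset.sum_nbij' (i := fun a => w a) (j := fun a => w⁻¹ a)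
  · intro a ha
    rw [mem_Icc] at ha ⊢
    exact apply_mem hw ha.1 ha.2
  · intro a ha
    rw [mem_Icc] at ha ⊢
    exact apply_mem (inv_permOn hw) ha.1 ha.2
  · intro a _; exact w.symm_apply_apply a
  · intro a _; exact w.apply_symm_apply a
  · intro a _; rfl

lemma dis_eq (n : ℕ) {w : Equiv.Perm ℤ} (hw : IsPermOn n w) :
    dis n w = 2 * ∑ i ∈ Icc (1:ℤ) (n:ℤ), ((w i - i).toNat : ℤ) := by
  have h1 : dis n w = ∑ i ∈ Icc (1:ℤ) (n:ℤ), (2 * ((w i - i).toNat : ℤ) - (w i - i)) := by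
    apply Finset.sum_congr rfl
    intro i _
    rcases le_total 0 (w i - i) with h | h
    · rw [abs_of_nonneg h, Int.toNat_of_nonneg h]; ring
    · rw [abs_of_nonpos h, Int.toNat_of_nonpos h]; push_cast; ring
  rw [h1, Finset.sum_sub_distrib, ← Finset.mul_sum, Finset.sum_sub_distrib, sum_eq n hw]
  ring

/-! ### Coxeter length equals inversion number -/

lemma s_permOn {n i : ℕ} (h1 : 1 ≤ i) (h2 : i + 1 ≤ n) : IsPermOn n (s i) := by
  intro j hj
  have hi1 : (1:ℤ) ≤ (i:ℤ) := by exact_mod_cast h1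
  have hi2 : (i:ℤ) + 1 ≤ (n:ℤ) := by exact_mod_cast h2
  apply Equiv.swap_apply_of_ne_of_ne <;> omega

lemma mul_permOn {n : ℕ} {w v : Equiv.Perm ℤ} (hw : IsPermOn n w) (hv : IsPermOn n v) :
    IsPermOn n (w * v) := by
  intro i hi
  simp only [Equiv.Perm.mul_apply, hv i hi, hw i hi]

lemma swap_pair {n i : ℕ} (h1 : 1 ≤ i) (h2 : i + 1 ≤ n) {a b : ℤ}
    (hab : a < b) (ha : 1 ≤ a) (ha' : a ≤ n) (hb : 1 ≤ b) (hb' : b ≤ n)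
    (hne : ¬(a = (i:ℤ) ∧ b = (i:ℤ) + 1)) :
    s i a < s i b ∧ 1 ≤ s i a ∧ s i a ≤ n ∧ 1 ≤ s i b ∧ s i b ≤ n ∧
      ¬(s i a = (i:ℤ) ∧ s i b = (i:ℤ) + 1) := by
  have hi1 : (1:ℤ) ≤ (i:ℤ) := by exact_mod_cast h1
  have hi2 : (i:ℤ) + 1 ≤ (n:ℤ) := by exact_mod_cast h2
  simp only [s, Equiv.swap_apply_def]
  split_ifs <;> omega

lemma invw_mul_s {n : ℕ} (w : Equiv.Perm ℤ) {i : ℕ} (h1 : 1 ≤ i) (h2 : i + 1 ≤ n) :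
    if w ((i:ℤ)+1) < w (i:ℤ) then invw n (w * s i) + 1 = invw n w
    else invw n w + 1 = invw n (w * s i) := by
  have hi1 : (1:ℤ) ≤ (i:ℤ) := by exact_mod_cast h1
  have hi2 : (i:ℤ) + 1 ≤ (n:ℤ) := by exact_mod_cast h2
  set d : ℤ × ℤ := ((i:ℤ), (i:ℤ)+1) with hd
  set A := ((Icc (1:ℤ) (n:ℤ) ×ˢ Icc (1:ℤ) (n:ℤ)).filter
    (fun p => p.1 < p.2 ∧ w p.2 < w p.1)) with hA
  set A' := ((Icc (1:ℤ) (n:ℤ) ×ˢ Icc (1:ℤ) (n:ℤ)).filter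
    (fun p => p.1 < p.2 ∧ (w * s i) p.2 < (w * s i) p.1)) with hA'
  have hsii : s i ((i:ℤ)) = (i:ℤ) + 1 := Equiv.swap_apply_left _ _
  have hsii' : s i ((i:ℤ)+1) = (i:ℤ) := Equiv.swap_apply_right _ _
  have hss : ∀ x : ℤ, s i (s i x) = x := fun x => Equiv.swap_apply_self _ _ x
  have hdA : d ∈ A ↔ w ((i:ℤ)+1) < w (i:ℤ) := by
    simp only [hA, hd, mem_filter, mem_product, mem_Icc]
    constructor
    · rintro ⟨_, _, h⟩; exact h
    · intro h; exact ⟨⟨⟨by omega, by omega⟩, by omega, by omega⟩, by omega, h⟩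
  have hdA' : d ∈ A' ↔ w ((i:ℤ)) < w ((i:ℤ)+1) := by
    simp only [hA', hd, mem_filter, mem_product, mem_Icc]
    simp only [Equiv.Perm.mul_apply, hsii, hsii']
    constructor
    · rintro ⟨_, _, h⟩; exact h
    · intro h; exact ⟨⟨⟨by omega, by omega⟩, by omega, by omega⟩, by omega, h⟩
  have hcard : (A.erase d).card = (A'.erase d).card := by
    apply Finset.card_nbij' (i := fun p => (s i p.1, s i p.2)) (j := fun p => (s i p.1, s i p.2))
    · intro p hp
      rw [Finset.mem_coe, Finset.mem_erase] at hp
      rw [Finset.mem_coe, Finset.mem_erase]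
      obtain ⟨hpd, hp⟩ := hp
      simp only [hA, mem_filter, mem_product, mem_Icc] at hp
      obtain ⟨⟨⟨q1, q2⟩, q3, q4⟩, hlt, hval⟩ := hp
      have hpne : ¬(p.1 = (i:ℤ) ∧ p.2 = (i:ℤ)+1) := by
        intro ⟨e1, e2⟩; exact hpd (Prod.ext e1 e2)
      obtain ⟨o1, o2, o3, o4, o5, o6⟩ := swap_pair h1 h2 hlt q1 q2 q3 q4 hpne
      constructor
      · intro h; apply o6; rw [Prod.ext_iff] at h; exact ⟨h.1, h.2⟩
      · simp only [hA', mem_filter, mem_product, mem_Icc]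
        simp only [Equiv.Perm.mul_apply, hss]
        exact ⟨⟨⟨o2, o3⟩, o4, o5⟩, o1, hval⟩
    · intro p hp
      rw [Finset.mem_coe, Finset.mem_erase] at hp
      rw [Finset.mem_coe, Finset.mem_erase]
      obtain ⟨hpd, hp⟩ := hp
      simp only [hA', mem_filter, mem_product, mem_Icc] at hp
      simp only [Equiv.Perm.mul_apply] at hp
      obtain ⟨⟨⟨q1, q2⟩, q3, q4⟩, hlt, hval⟩ := hp
      have hpne : ¬(p.1 = (i:ℤ) ∧ p.2 = (i:ℤ)+1) := by
        intro ⟨e1, e2⟩; exact hpd (Prod.ext e1 e2)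
      obtain ⟨o1, o2, o3, o4, o5, o6⟩ := swap_pair h1 h2 hlt q1 q2 q3 q4 hpne
      constructor
      · intro h; apply o6; rw [Prod.ext_iff] at h; exact ⟨h.1, h.2⟩
      · simp only [hA, mem_filter, mem_product, mem_Icc]
        exact ⟨⟨⟨o2, o3⟩, o4, o5⟩, o1, hval⟩
    · intro p _; simp [hss]
    · intro p _; simp [hss]
  have hinvA : invw n w = A.card := rfl
  have hinvA' : invw n (w * s i) = A'.card := rfl
  have hwne : w ((i:ℤ)+1) ≠ w (i:ℤ) := fun h => by
    have := w.injective h; omega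
  by_cases hdesc : w ((i:ℤ)+1) < w (i:ℤ)
  · rw [if_pos hdesc]
    have hmem : d ∈ A := hdA.mpr hdesc
    have hnmem : d ∉ A' := fun h => by have := hdA'.mp h; omega
    rw [hinvA, hinvA', ← Finset.erase_eq_of_notMem hnmem, ← hcard,
      Finset.card_erase_of_mem hmem]
    have : 1 ≤ A.card := Finset.card_pos.mpr ⟨d, hmem⟩
    omega
  · rw [if_neg hdesc]
    have hasc : w ((i:ℤ)) < w ((i:ℤ)+1) := by
      rcases lt_or_eq_of_le (le_of_not_gt hdesc) with h | h
      · exact h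
      · exact absurd h.symm hwne
    have hmem : d ∈ A' := hdA'.mpr hasc
    have hnmem : d ∉ A := fun h => by have := hdA.mp h; omega
    rw [hinvA, hinvA', ← Finset.erase_eq_of_notMem hnmem, hcard,
      Finset.card_erase_of_mem hmem]
    have : 1 ≤ A'.card := Finset.card_pos.mpr ⟨d, hmem⟩
    omega

lemma invw_one (n : ℕ) : invw n 1 = 0 := by
  rw [invw, Finset.card_eq_zero]
  apply Finset.filter_false_of_mem
  intro p _
  simp only [Equiv.Perm.one_apply]
  omega

lemma invw_le_word {n : ℕ} : ∀ l : List ℕ, (∀ i ∈ l, 1 ≤ i ∧ i + 1 ≤ n) →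
    invw n (l.map s).prod ≤ l.length := by
  intro l
  induction l using List.reverseRecOn with
  | nil => intro _; simp [invw_one]
  | append_singleton l a ih =>
    intro hall
    have ha := hall a (by simp)
    have hl : ∀ i ∈ l, 1 ≤ i ∧ i + 1 ≤ n := fun i hi => hall i (by simp [hi])
    rw [List.map_append, List.prod_append]
    simp only [List.map_cons, List.map_nil, List.prod_cons, List.prod_nil, mul_one]
    have hkey := invw_mul_s (n := n) ((l.map s).prod) ha.1 ha.2
    have := ih hl
    simp only [List.length_append, List.length_singleton]
    split at hkey <;> omega

lemma descent_aux {n : ℕ} (w : Equiv.Perm ℤ) :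
    ∀ d : ℕ, ∀ a b : ℤ, 1 ≤ a → b ≤ n → a < b → (b - a - 1).toNat = d → w b < w a →
    ∃ i : ℕ, 1 ≤ i ∧ i + 1 ≤ n ∧ w ((i:ℤ)+1) < w (i:ℤ) := by
  intro d
  induction d with
  | zero =>
    intro a b ha hb hab hd hv
    have hba : b = a + 1 := by omega
    refine ⟨a.toNat, by omega, by omega, ?_⟩
    have hcast : ((a.toNat : ℕ) : ℤ) = a := Int.toNat_of_nonneg (by omega)
    rw [hcast, ← hba]
    exact hv
  | succ d ih =>
    intro a b ha hb hab hd hv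
    have hab' : a + 1 < b := by omega
    by_cases hc : w (a+1) < w a
    · refine ⟨a.toNat, by omega, by omega, ?_⟩
      have hcast : ((a.toNat : ℕ) : ℤ) = a := Int.toNat_of_nonneg (by omega)
      rw [hcast]
      exact hc
    · have hne : w a ≠ w (a+1) := fun h => by
        have := w.injective h; omega
      have : w b < w (a+1) := lt_of_lt_of_le hv (le_of_not_gt hc)
      exact ih (a+1) b (by omega) hb (by omega) (by omega) this

lemma exists_descent {n : ℕ} {w : Equiv.Perm ℤ} (h : invw n w ≠ 0) :
    ∃ i : ℕ, 1 ≤ i ∧ i + 1 ≤ n ∧ w ((i:ℤ)+1) < w (i:ℤ) := by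
  obtain ⟨p, hp⟩ := Finset.card_pos.mp (Nat.pos_of_ne_zero h)
  simp only [mem_filter, mem_product, mem_Icc] at hp
  obtain ⟨⟨⟨ha1, ha2⟩, hb1, hb2⟩, hab, hv⟩ := hp
  exact descent_aux w (p.2 - p.1 - 1).toNat p.1 p.2 ha1 hb2 hab rfl hv

lemma eq_one_of_invw_zero {n : ℕ} {w : Equiv.Perm ℤ} (hw : IsPermOn n w)
    (h : invw n w = 0) : w = 1 := by
  have hmono : ∀ a b : ℤ, 1 ≤ a → a < b → b ≤ n → w a < w b := by
    intro a b ha hab hb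
    have hne : w a ≠ w b := fun hh => by have := w.injective hh; omega
    by_contra hcon
    have hba : w b < w a := by
      rcases lt_or_eq_of_le (le_of_not_gt hcon) with hh | hh
      · exact hh
      · exact absurd hh.symm hne
    have hmem : (a, b) ∈ ((Icc (1:ℤ) (n:ℤ) ×ˢ Icc (1:ℤ) (n:ℤ)).filter
        (fun p => p.1 < p.2 ∧ w p.2 < w p.1)) := by
      simp only [mem_filter, mem_product, mem_Icc]
      exact ⟨⟨⟨by omega, by omega⟩, by omega, by omega⟩, hab, hba⟩
    rw [invw, Finset.card_eq_zero] at h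
    rw [h] at hmem
    exact absurd hmem (Finset.notMem_empty _)
  apply Equiv.ext
  intro k
  simp only [Equiv.Perm.one_apply]
  by_cases hk : k < 1 ∨ (n:ℤ) < k
  · exact hw k hk
  push_neg at hk
  obtain ⟨hk1, hk2⟩ := hk
  have hwk := apply_mem hw hk1 hk2
  -- lower bound: k ≤ w k
  have hlow : (Icc (1:ℤ) k).image w ⊆ Icc (1:ℤ) (w k) := by
    intro v hv
    simp only [Finset.mem_image, mem_Icc] at hv ⊢
    obtain ⟨j, ⟨hj1, hj2⟩, rfl⟩ := hv
    have := apply_mem hw hj1 (by omega)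
    refine ⟨this.1, ?_⟩
    rcases lt_or_eq_of_le hj2 with hh | hh
    · exact le_of_lt (hmono j k hj1 hh hk2)
    · subst hh; exact le_refl _
  have hc1 := Finset.card_le_card hlow
  rw [Finset.card_image_of_injective _ w.injective, Int.card_Icc, Int.card_Icc] at hc1
  -- upper bound: w k ≤ k
  have hhigh : (Icc k (n:ℤ)).image w ⊆ Icc (w k) (n:ℤ) := by
    intro v hv
    simp only [Finset.mem_image, mem_Icc] at hv ⊢
    obtain ⟨j, ⟨hj1, hj2⟩, rfl⟩ := hv
    have := apply_mem hw (by omega) hj2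
    refine ⟨?_, this.2⟩
    rcases lt_or_eq_of_le hj1 with hh | hh
    · exact le_of_lt (hmono k j hk1 hh hj2)
    · subst hh; exact le_refl _
  have hc2 := Finset.card_le_card hhigh
  rw [Finset.card_image_of_injective _ w.injective, Int.card_Icc, Int.card_Icc] at hc2
  omega

lemma exists_word {n : ℕ} : ∀ m : ℕ, ∀ v : Equiv.Perm ℤ, IsPermOn n v → invw n v = m →
    ∃ l : List ℕ, IsWord n v l ∧ l.length = m := by
  intro m
  induction m using Nat.strong_induction_on with
  | _ m ih =>
    intro v hv hm
    rcases Nat.eq_zero_or_pos m with h0 | hpos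
    · subst h0
      have : v = 1 := eq_one_of_invw_zero hv hm
      subst this
      exact ⟨[], ⟨by simp, by simp⟩, rfl⟩
    · obtain ⟨i, hi1, hi2, hdesc⟩ := exists_descent (n := n) (w := v) (by omega)
      have hv' : IsPermOn n (v * s i) := mul_permOn hv (s_permOn hi1 hi2)
      have hkey := invw_mul_s (n := n) v hi1 hi2
      rw [if_pos hdesc] at hkey
      obtain ⟨l, ⟨hlet, hprod⟩, hlen⟩ := ih (m - 1) (by omega) (v * s i) hv' (by omega)
      refine ⟨l ++ [i], ⟨?_, ?_⟩, ?_⟩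
      · intro j hj
        rcases List.mem_append.mp hj with h | h
        · exact hlet j h
        · simp only [List.mem_singleton] at h; subst h; exact ⟨hi1, hi2⟩
      · rw [List.map_append, List.prod_append, hprod]
        simp only [List.map_cons, List.map_nil, List.prod_cons, List.prod_nil, mul_one]
        rw [mul_assoc]
        have : s i * s i = 1 := Equiv.swap_mul_self _ _
        rw [this, mul_one]
      · simp only [List.length_append, List.length_singleton]
        omega

lemma len_eq_invw {n : ℕ} {w : Equiv.Perm ℤ} (hw : IsPermOn n w) : len n w = invw n w := by
  obtain ⟨l, hl, hlen⟩ := exists_word (n := n) (invw n w) w hw rfl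
  apply le_antisymm
  · exact Nat.sInf_le ⟨l, hl, hlen⟩
  · have hne : {m | ∃ l : List ℕ, IsWord n w l ∧ l.length = m}.Nonempty :=
      ⟨invw n w, ⟨l, hl, hlen⟩⟩
    apply le_csInf hne
    rintro m ⟨l', ⟨hlet, hprod⟩, rfl⟩
    have := invw_le_word (n := n) l' hlet
    rwa [hprod] at this

/-! ### The main theorem -/

theorem stmt_0 (n : ℕ) (hn : 1 ≤ n) (w : Equiv.Perm ℤ) (hw : IsPermOn n w) :
    dis n w = 2 * (len n w : ℤ) ↔
      ¬ ∃ i j k : ℤ, 1 ≤ i ∧ i < j ∧ j < k ∧ k ≤ (n : ℤ) ∧ w i > w j ∧ w j > w k := by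
  rw [dis_eq n hw, len_eq_invw hw, invw_eq_sum]
  have hA : ∀ i ∈ Icc (1:ℤ) (n:ℤ), (w i - i).toNat ≤ (Cset n w i).card := by
    intro i hi
    rw [mem_Icc] at hi
    exact card_C_ge hw hi.1 hi.2
  constructor
  · intro heq
    rintro ⟨i, j, k, hi, hij, hjk, hk, h1, h2⟩
    have heqn : ∑ i ∈ Icc (1:ℤ) (n:ℤ), (w i - i).toNat
        = ∑ i ∈ Icc (1:ℤ) (n:ℤ), (Cset n w i).card := by
      have h2' : (2:ℤ) ≠ 0 := by norm_num
      have := mul_left_cancel₀ h2' heq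
      exact_mod_cast this
    have hterm := (Finset.sum_eq_sum_iff_of_le hA).mp heqn j
      (by rw [mem_Icc]; omega)
    have := card_C_gt hw hi hij hjk hk h1 h2
    omega
  · intro hav
    have : ∀ i ∈ Icc (1:ℤ) (n:ℤ), ((w i - i).toNat : ℤ) = ((Cset n w i).card : ℤ) := by
      intro i hi
      rw [mem_Icc] at hi
      have := card_C_le hw hav hi.1 hi.2
      have := card_C_ge hw hi.1 hi.2
      omega
    rw [Finset.sum_congr rfl this]
    push_cast
    ring

end Stmt0
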